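/- Let 1/2 < τ ≤ 1 and let γ(t) = f(e^{it}) with f(z) = (z−1)^τ exp((z+1)/(z−1)) (principal branch). Then the arc length integral ∫₀^{ε} |γ'(t)| dt diverges for every ε ∈ (0, 2π); more precisely, |γ'(t)| ≥ c / t^{2−τ} for some constant c > 0 and all sufficiently small t > 0, and ∫₀^ε t^{τ−2} dt = +∞ when τ ≤ 1. -/

import Mathlib

open Complex MeasureTheory

-- Part 3 auxiliary
lemma aux3 (τ : ℝ) (hτ1 : τ ≤ 1) (ε : ℝ) (hε : 0 < ε) :
    ∫⁻ t in Set.Ioo (0:ℝ) ε, ENNReal.ofReal (t ^ (τ - 2)) = ⊤ := by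
  by_contra h
  have hmeas : Measurable fun t : ℝ => t ^ (τ - 2) := measurable_id.pow measurable_const
  have hnn : 0 ≤ᵐ[volume.restrict (Set.Ioo (0:ℝ) ε)] fun t : ℝ => t ^ (τ - 2) := by
    filter_upwards [ae_restrict_mem measurableSet_Ioo] with t ht
    exact Real.rpow_nonneg ht.1.le _
  have hint : IntegrableOn (fun t : ℝ => t ^ (τ - 2)) (Set.Ioo 0 ε) := by
    refine ⟨hmeas.aestronglyMeasurable, ?_⟩
    rw [hasFiniteIntegral_iff_ofReal hnn]
    exact lt_top_iff_ne_top.mpr h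
  rw [intervalIntegral.integrableOn_Ioo_rpow_iff hε] at hint
  linarith

lemma key (τ : ℝ) (hτ0 : 0 < τ) (hτ2 : τ ≤ 2) (t : ℝ) (ht : t ∈ Set.Ioo 0 Real.pi) :
    2 * t ^ (τ - 2) ≤ ‖deriv (fun s : ℝ =>
      (Complex.exp (Complex.I * s) - 1) ^ (τ : ℂ) *
      Complex.exp ((Complex.exp (Complex.I * s) + 1) / (Complex.exp (Complex.I * s) - 1))) t‖ := by
  obtain ⟨ht0, htπ⟩ := ht
  set z : ℂ := Complex.exp (Complex.I * t) with hz_def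
  set w : ℂ := z - 1 with hw_def
  have hzt : (Complex.I * (t:ℂ)) = (t:ℂ) * Complex.I := mul_comm _ _
  have hwim : w.im = Real.sin t := by
    simp [hw_def, hz_def, hzt, Complex.exp_ofReal_mul_I_im]
  have hsin : 0 < Real.sin t := Real.sin_pos_of_pos_of_lt_pi ht0 htπ
  have hw0 : w ≠ 0 := fun h => by simp [h] at hwim; linarith
  have hslit : w ∈ Complex.slitPlane := Complex.mem_slitPlane_iff.2 (Or.inr (by rw [hwim]; exact hsin.ne'))
  -- derivative of s ↦ exp (I * s)
  have hz' : HasDerivAt (fun s : ℝ => Complex.exp (Complex.I * s)) (z * Complex.I) t := by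
    have h1 : HasDerivAt (fun s : ℝ => (s : ℂ)) 1 t := Complex.ofRealCLM.hasDerivAt
    have h2 := (h1.mul_const Complex.I).cexp
    simp only [one_mul] at h2
    convert h2 using 2 with s
    · rw [mul_comm]
    · rw [hz_def, hzt]
  have hw' : HasDerivAt (fun s : ℝ => Complex.exp (Complex.I * s) - 1) (z * Complex.I) t :=
    hz'.sub_const 1
  have hnum' : HasDerivAt (fun s : ℝ => Complex.exp (Complex.I * s) + 1) (z * Complex.I) t :=
    hz'.add_const 1
  have hq' : HasDerivAt (fun s : ℝ => (Complex.exp (Complex.I * s) + 1) / (Complex.exp (Complex.I * s) - 1))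
      ((z * Complex.I * w - (z + 1) * (z * Complex.I)) / w ^ 2) t := hnum'.div hw' hw0
  have hg' := hq'.cexp
  have hp' : HasDerivAt (fun s : ℝ => (Complex.exp (Complex.I * s) - 1) ^ (τ : ℂ))
      (((τ : ℂ) * w ^ ((τ : ℂ) - 1)) * (z * Complex.I)) t := by
    have := (Complex.hasStrictDerivAt_cpow_const (c := (τ : ℂ)) hslit).hasDerivAt.comp t hw'
    simpa [Function.comp_def] using this
  have hF := hp'.fun_mul hg'
  rw [hF.deriv]
  -- simplify the derivative
  set q : ℂ := (z + 1) / w with hq_def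
  have hcp : w ^ ((τ : ℂ) - 1) = w ^ (τ : ℂ) / w := by
    rw [Complex.cpow_sub _ _ hw0, Complex.cpow_one]
  have hD : (τ : ℂ) * w ^ ((τ : ℂ) - 1) * (z * Complex.I) * Complex.exp q +
      (w ^ (τ : ℂ)) * (Complex.exp q * ((z * Complex.I * w - (z + 1) * (z * Complex.I)) / w ^ 2)) =
      Complex.exp q * z * Complex.I * w ^ (τ : ℂ) * ((τ : ℂ) * w - 2) / w ^ 2 := by
    rw [hcp]
    have : z * Complex.I * w - (z + 1) * (z * Complex.I) = z * Complex.I * (-2 : ℂ) := by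
      rw [hw_def]; ring
    rw [this]
    field_simp
    ring
  rw [hD]
  -- real part of q is zero
  have hz0 : z ≠ 0 := Complex.exp_ne_zero _
  have hconjz : (starRingEnd ℂ) z = z⁻¹ := by
    rw [hz_def, ← Complex.exp_conj, ← Complex.exp_neg]
    congr 1
    simp [Complex.conj_I, mul_comm]
  have hzinv1 : z⁻¹ - 1 ≠ 0 := by
    intro h
    have h1 : z⁻¹ = 1 := sub_eq_zero.mp h
    have h2 : z = 1 := by rw [← inv_inv z, h1, inv_one]
    exact hw0 (by rw [hw_def, h2, sub_self])
  have hqconj : (starRingEnd ℂ) q = -q := by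
    have h1z : (1 : ℂ) - z ≠ 0 := by
      intro h
      exact hw0 (by rw [hw_def, (sub_eq_zero.mp h).symm, sub_self])
    rw [hq_def, hw_def, map_div₀, map_add, map_sub, hconjz, map_one]
    field_simp
    ring_nf
    have hz1 : -1 + z ≠ 0 := by rw [neg_add_eq_sub]; exact hw0
    field_simp
    ring
  have hqre : q.re = 0 := by
    have h2 := congrArg Complex.re hqconj
    simp only [Complex.conj_re, Complex.neg_re] at h2
    linarith
  have habs_exp : ‖Complex.exp q‖ = 1 := by
    rw [Complex.norm_exp, hqre, Real.exp_zero]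
  have habs_z : ‖z‖ = 1 := by
    rw [hz_def, hzt]; exact Complex.norm_exp_ofReal_mul_I t
  simp only [norm_div, norm_mul, norm_pow, Complex.norm_I, Complex.norm_cpow_real, habs_exp,
    habs_z, one_mul, mul_one]
  set A := ‖w‖ with hA_def
  have hA0 : 0 < A := norm_pos_iff.mpr hw0
  have hwre : w.re = Real.cos t - 1 := by
    simp [hw_def, hz_def, hzt, Complex.exp_ofReal_mul_I_re]
  have hnormSq : A ^ 2 = (Real.cos t - 1) ^ 2 + Real.sin t ^ 2 := by
    rw [hA_def, Complex.sq_norm, Complex.normSq_apply, hwre, hwim]; ring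
  have hA_le : A ≤ t := by
    have hcs : Real.sin t ^ 2 + Real.cos t ^ 2 = 1 := Real.sin_sq_add_cos_sq t
    have hcos : 1 - t ^ 2 / 2 ≤ Real.cos t := Real.one_sub_sq_div_two_le_cos
    nlinarith [hA0, ht0]
  have h2le : 2 ≤ ‖(τ : ℂ) * w - 2‖ := by
    have hre : ((τ : ℂ) * w - 2).re = τ * w.re - 2 := by
      simp [Complex.mul_re]
    have hle : ((τ : ℂ) * w - 2).re ≤ -2 := by
      rw [hre, hwre]
      nlinarith [Real.cos_le_one t]
    calc (2 : ℝ) ≤ |((τ : ℂ) * w - 2).re| := le_abs.mpr (Or.inr (by linarith))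
      _ ≤ ‖(τ : ℂ) * w - 2‖ := Complex.abs_re_le_norm _
  have hpow : A ^ τ / A ^ 2 = A ^ (τ - 2) := by
    rw [← Real.rpow_natCast A 2, ← Real.rpow_sub hA0]
    norm_num
  have hrp : t ^ (τ - 2) ≤ A ^ (τ - 2) :=
    Real.rpow_le_rpow_of_nonpos hA0 hA_le (by linarith)
  calc 2 * t ^ (τ - 2) ≤ 2 * A ^ (τ - 2) := by
        exact mul_le_mul_of_nonneg_left hrp (by norm_num)
    _ = A ^ τ * 2 / A ^ 2 := by rw [← hpow]; ring
    _ ≤ A ^ τ * ‖(τ : ℂ) * w - 2‖ / A ^ 2 := by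
        gcongr


theorem stmt11 (τ : ℝ) (hτ : 1 / 2 < τ) (hτ1 : τ ≤ 1)
    (γ : ℝ → ℂ)
    (hγ : ∀ t : ℝ, γ t = (Complex.exp (Complex.I * t) - 1) ^ (τ : ℂ) *
      Complex.exp ((Complex.exp (Complex.I * t) + 1) / (Complex.exp (Complex.I * t) - 1))) :
    (∃ c > (0 : ℝ), ∃ ε₀ > (0 : ℝ), ∀ t ∈ Set.Ioo 0 ε₀,
      c / t ^ (2 - τ) ≤ ‖deriv γ t‖) ∧
    (∀ ε ∈ Set.Ioo (0 : ℝ) (2 * Real.pi),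
      ∫⁻ t in Set.Ioo (0 : ℝ) ε, ENNReal.ofReal (‖deriv γ t‖) = ⊤) ∧
    (∀ ε > (0 : ℝ), ∫⁻ t in Set.Ioo (0 : ℝ) ε, ENNReal.ofReal (t ^ (τ - 2)) = ⊤) := by
  have hγF : γ = fun s : ℝ => (Complex.exp (Complex.I * s) - 1) ^ (τ : ℂ) *
      Complex.exp ((Complex.exp (Complex.I * s) + 1) / (Complex.exp (Complex.I * s) - 1)) :=
    funext hγ
  have hkey : ∀ t ∈ Set.Ioo (0:ℝ) Real.pi, 2 * t ^ (τ - 2) ≤ ‖deriv γ t‖ := by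
    intro t ht
    rw [hγF]
    exact key τ (by linarith) (by linarith) t ht
  have hbound : ∀ t ∈ Set.Ioo (0:ℝ) Real.pi, 2 / t ^ (2 - τ) ≤ ‖deriv γ t‖ := by
    intro t ht
    rw [div_eq_mul_inv, ← Real.rpow_neg ht.1.le, neg_sub]
    exact hkey t ht
  refine ⟨⟨2, by norm_num, Real.pi, Real.pi_pos, hbound⟩, ?_, fun ε hε => aux3 τ hτ1 ε hε⟩
  intro ε hε
  set δ := min ε Real.pi with hδ_def
  have hδ : 0 < δ := lt_min hε.1 Real.pi_pos
  have hsub : Set.Ioo (0:ℝ) δ ⊆ Set.Ioo 0 ε := Set.Ioo_subset_Ioo le_rfl (min_le_left _ _)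
  have hm : Measurable fun t : ℝ => ENNReal.ofReal (t ^ (τ - 2)) :=
    (measurable_id.pow measurable_const).ennreal_ofReal
  have h2 : ∫⁻ t in Set.Ioo (0:ℝ) δ, ENNReal.ofReal (2 * t ^ (τ - 2)) = ⊤ := by
    have he : ∀ t : ℝ, ENNReal.ofReal (2 * t ^ (τ - 2)) = 2 * ENNReal.ofReal (t ^ (τ - 2)) := by
      intro t
      rw [ENNReal.ofReal_mul (by norm_num : (0:ℝ) ≤ 2)]
      norm_num
    simp_rw [he]
    rw [lintegral_const_mul 2 hm, aux3 τ hτ1 δ hδ, ENNReal.mul_top (by norm_num)]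
  have h3 : ∫⁻ t in Set.Ioo (0:ℝ) δ, ENNReal.ofReal (2 * t ^ (τ - 2)) ≤
      ∫⁻ t in Set.Ioo (0:ℝ) δ, ENNReal.ofReal (‖deriv γ t‖) := by
    refine setLIntegral_mono' measurableSet_Ioo fun t ht' => ENNReal.ofReal_le_ofReal ?_
    exact hkey t ⟨ht'.1, lt_of_lt_of_le ht'.2 (min_le_right _ _)⟩
  rw [← top_le_iff]
  calc (⊤ : ENNReal) = ∫⁻ t in Set.Ioo (0:ℝ) δ, ENNReal.ofReal (2 * t ^ (τ - 2)) := h2.symm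
    _ ≤ ∫⁻ t in Set.Ioo (0:ℝ) δ, ENNReal.ofReal (‖deriv γ t‖) := h3
    _ ≤ ∫⁻ t in Set.Ioo (0:ℝ) ε, ENNReal.ofReal (‖deriv γ t‖) :=
        lintegral_mono_set hsub
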